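/- For independent Bernoulli(p) random variables (ε_{i,j}), β > 0, and γ = β/(2Np), the covariance Cov(e^{-βH(σ)}, βH(τ)) equals -E[e^{-βH(σ)}] · (β/(2N)) · Σ_{k,l=1}^N τ_k τ_l · ( e^{γ σ_k σ_l}/(1-p+p e^{γ σ_k σ_l}) - 1 ), for all σ, τ ∈ {-1,+1}^N. -/

import Mathlib

open MeasureTheory ProbabilityTheory

theorem covariance_exp_hamiltonian_hamiltonian
    {Ω : Type*} [MeasureSpace Ω] [IsProbabilityMeasure (ℙ : Measure Ω)]
    (N : ℕ) (hN : 0 < N) (p : ℝ) (hp : 0 < p) (hp1 : p ≤ 1) (β : ℝ) (hβ : 0 < β)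
    (γ : ℝ) (hγ : γ = β / (2 * N * p))
    (ε : Fin N × Fin N → Ω → ℝ)
    (hmeas : ∀ k, Measurable (ε k))
    (hval : ∀ k, ∀ᵐ ω ∂ℙ, ε k ω = 0 ∨ ε k ω = 1)
    (hmean : ∀ k, ∫ ω, ε k ω ∂ℙ = p)
    (hindep : iIndepFun ε ℙ)
    (σ τ : Fin N → ℝ) (hσ : ∀ i, σ i = 1 ∨ σ i = -1) (hτ : ∀ i, τ i = 1 ∨ τ i = -1)
    (H : (Fin N → ℝ) → Ω → ℝ)
    (hH : ∀ ρ ω, H ρ ω = -(1 / (2 * N * p)) * ∑ i : Fin N, ∑ j : Fin N, ρ i * ρ j * ε (i, j) ω) :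
    (∫ ω, Real.exp (-β * H σ ω) * (β * H τ ω) ∂ℙ)
        - (∫ ω, Real.exp (-β * H σ ω) ∂ℙ) * (∫ ω, β * H τ ω ∂ℙ)
      = -(∫ ω, Real.exp (-β * H σ ω) ∂ℙ) * (β / (2 * N)) *
          ∑ k : Fin N, ∑ l : Fin N,
            τ k * τ l *
              (Real.exp (γ * σ k * σ l) / (1 - p + p * Real.exp (γ * σ k * σ l)) - 1) := by
  have hN0 : (N : ℝ) ≠ 0 := Nat.cast_ne_zero.2 hN.ne'
  have hp0 : p ≠ 0 := hp.ne'
  -- notation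
  set s : Fin N × Fin N → ℝ := fun k => σ k.1 * σ k.2 with hs
  set t : Fin N × Fin N → ℝ := fun k => τ k.1 * τ k.2 with ht
  set X : Fin N × Fin N → Ω → ℝ := fun k ω => Real.exp (γ * s k * ε k ω) with hX
  have hsabs : ∀ k, |s k| = 1 := by
    intro k
    rcases hσ k.1 with h1 | h1 <;> rcases hσ k.2 with h2 | h2 <;> simp [hs, h1, h2]
  have hXmeas : ∀ k, Measurable (X k) :=
    fun k => Real.measurable_exp.comp (measurable_const.mul (hmeas k))
  -- pointwise identities
  have hexp : ∀ ω, Real.exp (-β * H σ ω) = ∏ k : Fin N × Fin N, X k ω := by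
    intro ω
    rw [← Real.exp_sum]
    congr 1
    rw [hH, Fintype.sum_prod_type]
    rw [Finset.mul_sum]
    simp only [Finset.mul_sum]
    refine Finset.sum_congr rfl fun i _ => Finset.sum_congr rfl fun j _ => ?_
    simp only [hs]
    rw [hγ]
    field_simp
  have hHτ : ∀ ω, β * H τ ω = ∑ k : Fin N × Fin N, -(γ * t k * ε k ω) := by
    intro ω
    rw [hH, Fintype.sum_prod_type]
    rw [Finset.mul_sum]
    simp only [Finset.mul_sum]
    refine Finset.sum_congr rfl fun i _ => Finset.sum_congr rfl fun j _ => ?_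
    simp only [ht]
    rw [hγ]
    field_simp
  -- a.e. boundedness facts
  have hae : ∀ᵐ ω ∂ℙ, ∀ k, ε k ω = 0 ∨ ε k ω = 1 := (ae_all_iff).2 hval
  have hεbd : ∀ k, ∀ᵐ ω ∂ℙ, |ε k ω| ≤ 1 := by
    intro k
    filter_upwards [hval k] with ω hω
    rcases hω with h | h <;> simp [h]
  have hXbd : ∀ k, ∀ᵐ ω ∂ℙ, |X k ω| ≤ Real.exp |γ| := by
    intro k
    filter_upwards [hval k] with ω hω
    rw [abs_of_pos (Real.exp_pos _)]
    apply Real.exp_le_exp.2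
    calc γ * s k * ε k ω ≤ |γ * s k * ε k ω| := le_abs_self _
      _ ≤ |γ| := by
          rw [abs_mul, abs_mul, hsabs k, mul_one]
          rcases hω with h | h <;> simp [h]
  set C : ℝ := Real.exp |γ| ^ (Fintype.card (Fin N × Fin N)) with hC
  -- integrability helper
  have int_bd : ∀ (f : Ω → ℝ) (D : ℝ), Measurable f → (∀ᵐ ω ∂ℙ, |f ω| ≤ D) → Integrable f ℙ := by
    intro f D hm hb
    refine (integrable_const D).mono' hm.aestronglyMeasurable ?_
    simpa [Real.norm_eq_abs] using hb
  have intε : ∀ k, Integrable (ε k) ℙ := fun k => int_bd _ 1 (hmeas k) (hεbd k)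
  have hPmeas : Measurable (fun ω => ∏ k : Fin N × Fin N, X k ω) :=
    Finset.measurable_prod _ fun k _ => hXmeas k
  have hPbd : ∀ᵐ ω ∂ℙ, |∏ k : Fin N × Fin N, X k ω| ≤ C := by
    filter_upwards [ae_all_iff.2 hXbd] with ω hω
    rw [Finset.abs_prod]
    calc ∏ x : Fin N × Fin N, |X x ω| ≤ ∏ _x : Fin N × Fin N, Real.exp |γ| :=
          Finset.prod_le_prod (fun k _ => abs_nonneg _) fun k _ => hω k
      _ = C := by rw [Finset.prod_const, hC, Finset.card_univ]
  have intP : Integrable (fun ω => ∏ k : Fin N × Fin N, X k ω) ℙ := int_bd _ C hPmeas hPbd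
  have intPε : ∀ k, Integrable (fun ω => (∏ j : Fin N × Fin N, X j ω) * ε k ω) ℙ := by
    intro k
    refine int_bd _ (C * 1) (hPmeas.mul (hmeas k)) ?_
    filter_upwards [hPbd, hεbd k] with ω h1 h2
    rw [abs_mul]
    exact mul_le_mul h1 h2 (abs_nonneg _) ((abs_nonneg _).trans h1)
  -- per-k key computation
  have Ek_pos : ∀ k, 0 < 1 - p + p * Real.exp (γ * s k) := by
    intro k
    have := Real.exp_pos (γ * s k)
    nlinarith
  have key : ∀ k : Fin N × Fin N,
      (∫ ω, (∏ j : Fin N × Fin N, X j ω) * ε k ω ∂ℙ)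
        - (∫ ω, ∏ j : Fin N × Fin N, X j ω ∂ℙ) * p
      = (∫ ω, ∏ j : Fin N × Fin N, X j ω ∂ℙ) * p *
          (Real.exp (γ * s k) / (1 - p + p * Real.exp (γ * s k)) - 1) := by
    intro k
    -- modified family: identity at k, exp elsewhere
    set g : Fin N × Fin N → ℝ → ℝ := fun j => if j = k then id else fun x => Real.exp (γ * s j * x) with hg
    have hgmeas : ∀ j, Measurable (g j) := by
      intro j
      by_cases h : j = k
      · simpa [hg, h] using measurable_id
      · simp only [hg, if_neg h]
        exact Real.measurable_exp.comp (measurable_const.mul measurable_id)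
    have hiZ : iIndepFun (fun j => g j ∘ ε j) ℙ := hindep.comp g hgmeas
    have hZmeas : ∀ j, Measurable (g j ∘ ε j) := fun j => (hgmeas j).comp (hmeas j)
    have hYZ : IndepFun (∏ j ∈ Finset.univ.erase k, (g j ∘ ε j)) (g k ∘ ε k) ℙ :=
      hiZ.indepFun_finsetProd_of_notMem hZmeas (Finset.notMem_erase k _)
    have hYε : IndepFun (∏ j ∈ Finset.univ.erase k, X j) (ε k) ℙ := by
      have e1 : (∏ j ∈ Finset.univ.erase k, (g j ∘ ε j)) = ∏ j ∈ Finset.univ.erase k, X j := by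
        refine Finset.prod_congr rfl fun j hj => ?_
        have hjk : j ≠ k := Finset.ne_of_mem_erase hj
        funext ω
        simp [hg, hjk, hX, Function.comp]
      have e2 : (g k ∘ ε k) = ε k := by simp [hg, Function.comp]
      rwa [e1, e2] at hYZ
    -- independence of Y and X k
    have hiX : iIndepFun X ℙ := by
      have h0 := hindep.comp (fun j (x : ℝ) => Real.exp (γ * s j * x))
        (fun j => Real.measurable_exp.comp (measurable_const.mul measurable_id))
      have h2 : (fun j => (fun (x : ℝ) => Real.exp (γ * s j * x)) ∘ ε j) = X := by
        funext j ω; simp [hX, Function.comp]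
      rwa [h2] at h0
    have hYXk : IndepFun (∏ j ∈ Finset.univ.erase k, X j) (X k) ℙ :=
      hiX.indepFun_finsetProd_of_notMem hXmeas (Finset.notMem_erase k _)
    set Y : Ω → ℝ := ∏ j ∈ Finset.univ.erase k, X j with hY
    have hYmeas : Measurable Y := by
      have : Y = fun ω => ∏ j ∈ Finset.univ.erase k, X j ω := by
        funext ω; rw [hY]; simp [Finset.prod_apply]
      rw [this]
      exact Finset.measurable_prod _ fun j _ => hXmeas j
    -- ∫ X k
    have hXk_int : ∫ ω, X k ω ∂ℙ = 1 - p + p * Real.exp (γ * s k) := by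
      have hcongr : (fun ω => X k ω) =ᵐ[ℙ] fun ω => 1 + (Real.exp (γ * s k) - 1) * ε k ω := by
        filter_upwards [hval k] with ω hω
        rcases hω with h | h <;> simp [hX, h]
      rw [integral_congr_ae hcongr, integral_add (integrable_const 1) ((intε k).const_mul _),
        integral_const, integral_const_mul, hmean k]
      simp; ring
    -- ∫ P = ∫ Y * ∫ X k
    have hPω : ∀ ω, (∏ j : Fin N × Fin N, X j ω) = Y ω * X k ω := by
      intro ω
      rw [hY]
      simp only [Finset.prod_apply]
      rw [mul_comm]
      exact (Finset.mul_prod_erase Finset.univ (fun j => X j ω) (Finset.mem_univ k)).symm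
    have hP_eq : (fun ω => ∏ j : Fin N × Fin N, X j ω) = Y * X k := by
      funext ω
      rw [hPω ω]
      rfl
    have hintP_eq : ∫ ω, (∏ j : Fin N × Fin N, X j ω) ∂ℙ = (∫ ω, Y ω ∂ℙ) * (∫ ω, X k ω ∂ℙ) := by
      rw [hP_eq]
      exact hYXk.integral_mul_eq_mul_integral hYmeas.aestronglyMeasurable (hXmeas k).aestronglyMeasurable
    -- ∫ P ε k = exp(γ s k) * ∫ Y * p
    have hPε_eq : ∫ ω, (∏ j : Fin N × Fin N, X j ω) * ε k ω ∂ℙ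
        = Real.exp (γ * s k) * (∫ ω, Y ω ∂ℙ) * p := by
      have hcongr : (fun ω => (∏ j : Fin N × Fin N, X j ω) * ε k ω)
          =ᵐ[ℙ] fun ω => Real.exp (γ * s k) * (Y ω * ε k ω) := by
        filter_upwards [hval k] with ω hω
        rw [hPω ω]
        rcases hω with h | h <;> simp [hX, h] <;> ring
      rw [integral_congr_ae hcongr, integral_const_mul,
        show (fun ω => Y ω * ε k ω) = Y * ε k from rfl,
        hYε.integral_mul_eq_mul_integral hYmeas.aestronglyMeasurable (hmeas k).aestronglyMeasurable, hmean k]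
      ring
    rw [hPε_eq, hintP_eq, hXk_int]
    have hE := (Ek_pos k).ne'
    rw [div_sub_one hE, mul_div_assoc', eq_div_iff hE]
    ring
  -- assemble
  have hIe : ∀ ω, Real.exp (-β * H σ ω) = ∏ k : Fin N × Fin N, X k ω := hexp
  have e1 : (∫ ω, Real.exp (-β * H σ ω) ∂ℙ) = ∫ ω, ∏ k : Fin N × Fin N, X k ω ∂ℙ := by
    congr 1; funext ω; exact hIe ω
  have e2 : (∫ ω, β * H τ ω ∂ℙ) = ∑ k : Fin N × Fin N, -(γ * t k * p) := by
    have : (fun ω => β * H τ ω) = fun ω => ∑ k : Fin N × Fin N, -(γ * t k * ε k ω) := by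
      funext ω; exact hHτ ω
    rw [this, integral_finset_sum]
    · refine Finset.sum_congr rfl fun k _ => ?_
      have : (fun ω => -(γ * t k * ε k ω)) = fun ω => (-(γ * t k)) * ε k ω := by
        funext ω; ring
      rw [this, integral_const_mul, hmean k]
      ring
    · intro k _
      have : (fun ω => -(γ * t k * ε k ω)) = fun ω => (-(γ * t k)) * ε k ω := by
        funext ω; ring
      rw [this]
      exact (intε k).const_mul _
  have e3 : (∫ ω, Real.exp (-β * H σ ω) * (β * H τ ω) ∂ℙ)
      = ∑ k : Fin N × Fin N, (-(γ * t k)) * ∫ ω, (∏ j : Fin N × Fin N, X j ω) * ε k ω ∂ℙ := by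
    have : (fun ω => Real.exp (-β * H σ ω) * (β * H τ ω))
        = fun ω => ∑ k : Fin N × Fin N, (-(γ * t k)) * ((∏ j : Fin N × Fin N, X j ω) * ε k ω) := by
      funext ω
      rw [hIe ω, hHτ ω, Finset.mul_sum]
      refine Finset.sum_congr rfl fun k _ => ?_
      ring
    rw [this, integral_finset_sum]
    · exact Finset.sum_congr rfl fun k _ => integral_const_mul _ _
    · exact fun k _ => (intPε k).const_mul _
  -- final computation
  have hγp : γ * p = β / (2 * N) := by
    rw [hγ]; field_simp
  have hR : (∑ k : Fin N, ∑ l : Fin N, τ k * τ l *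
        (Real.exp (γ * σ k * σ l) / (1 - p + p * Real.exp (γ * σ k * σ l)) - 1))
      = ∑ k : Fin N × Fin N, t k *
        (Real.exp (γ * s k) / (1 - p + p * Real.exp (γ * s k)) - 1) := by
    rw [Fintype.sum_prod_type]
    refine Finset.sum_congr rfl fun i _ => Finset.sum_congr rfl fun j _ => ?_
    simp [hs, ht, mul_assoc]
  rw [e1, e2, e3, hR, Finset.mul_sum, Finset.mul_sum, ← Finset.sum_sub_distrib]
  refine Finset.sum_congr rfl fun k _ => ?_
  have h1 : (-(γ * t k)) * (∫ ω, (∏ j : Fin N × Fin N, X j ω) * ε k ω ∂ℙ)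
      - (∫ ω, ∏ j : Fin N × Fin N, X j ω ∂ℙ) * (-(γ * t k * p))
      = (-(γ * t k)) * ((∫ ω, (∏ j : Fin N × Fin N, X j ω) * ε k ω ∂ℙ)
          - (∫ ω, ∏ j : Fin N × Fin N, X j ω ∂ℙ) * p) := by ring
  rw [h1, key k, ← hγp]
  ring
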